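/- arXiv:1801.05483 — 3 statements merged into one kernel-verified Lean document; each statement's English description precedes it below -/
import Mathlib

section
/- Let P̄ be Hermitian positive definite, W̄ diagonal nonnegative and commuting with P̄ so that W̄P̄ is Hermitian PSD. Then S_opt = √𝒫 · U₁*, where U₁'s columns are orthonormal eigenvectors of W̄P̄ for its τ largest eigenvalues, maximizes tr((S P̄ S*)^{-1} S P̄ W̄ P̄ S*) over all τ×n matrices S of full row rank whose columns s_k satisfy s_k* s_k ≤ 𝒫, achieving value equal to the sum of the τ largest eigenvalues of W̄P̄. -/
open Matrix ComplexOrder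

/-- If B commutes with a diagonal matrix, it commutes with any pointwise function of it. -/
lemma commute_diagonal_map {ι : Type*} [Fintype ι] [DecidableEq ι]
    (B : Matrix ι ι ℂ) (d : ι → ℂ) (g : ℂ → ℂ)
    (h : B * Matrix.diagonal d = Matrix.diagonal d * B) :
    B * Matrix.diagonal (fun i => g (d i)) = Matrix.diagonal (fun i => g (d i)) * B := by
  ext i j
  have h' := congrFun (congrFun h i) j
  rw [Matrix.mul_diagonal, Matrix.diagonal_mul] at h' ⊢
  rcases eq_or_ne (B i j) 0 with hb | hb
  · simp [hb]
  · have hd : d j = d i := by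
      have : (d j - d i) * B i j = 0 := by ring_nf; linear_combination h'
      rcases mul_eq_zero.mp this with h0 | h0
      · exact sub_eq_zero.mp h0
      · exact absurd h0 hb
    rw [hd, mul_comm]

lemma sqrtP_aux {n : ℕ}
    (P : Matrix (Fin n) (Fin n) ℂ) (hP : P.PosDef)
    (W : Matrix (Fin n) (Fin n) ℂ) (hcomm : W * P = P * W) :
    ∃ R : Matrix (Fin n) (Fin n) ℂ, Rᴴ = R ∧ R * R = P ∧ W * R = R * W := by
  have hPH : P.IsHermitian := hP.1
  set Uv : Matrix (Fin n) (Fin n) ℂ := (hPH.eigenvectorUnitary : Matrix (Fin n) (Fin n) ℂ)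
    with hUvdef
  have hUv1 : Uv * star Uv = 1 := Matrix.mem_unitaryGroup_iff.mp (hPH.eigenvectorUnitary).2
  have hUv1' : star Uv * Uv = 1 := Matrix.mem_unitaryGroup_iff'.mp (hPH.eigenvectorUnitary).2
  set d : Fin n → ℂ := fun i => (hPH.eigenvalues i : ℂ) with hd
  have hspec : P = Uv * Matrix.diagonal d * star Uv := by
    convert hPH.spectral_theorem using 2
    rw [Unitary.conjStarAlgAut_apply]; rfl
  set g : ℂ → ℂ := fun zc => (Real.sqrt zc.re : ℂ) with hg
  refine ⟨Uv * Matrix.diagonal (fun i => g (d i)) * star Uv, ?_, ?_, ?_⟩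
  · simp only [Matrix.star_eq_conjTranspose, Matrix.conjTranspose_mul,
      Matrix.conjTranspose_conjTranspose, Matrix.diagonal_conjTranspose]
    rw [show (star fun i => g (d i)) = fun i => g (d i) from funext fun i => by
      simp [hg, hd, Complex.star_def, Complex.conj_ofReal]]
    simp only [Matrix.mul_assoc]
  · have key : ∀ D₁ D₂ : Matrix (Fin n) (Fin n) ℂ,
        (Uv * D₁ * star Uv) * (Uv * D₂ * star Uv) = Uv * (D₁ * D₂) * star Uv := by
      intro D₁ D₂
      calc (Uv * D₁ * star Uv) * (Uv * D₂ * star Uv)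
          = Uv * (D₁ * ((star Uv * Uv) * (D₂ * star Uv))) := by simp only [Matrix.mul_assoc]
        _ = Uv * (D₁ * D₂) * star Uv := by rw [hUv1', Matrix.one_mul]; simp only [Matrix.mul_assoc]
    rw [key, Matrix.diagonal_mul_diagonal]
    rw [hspec]
    rw [show (fun i => g (d i) * g (d i)) = d from funext fun i => by
      simp only [hg, hd, Complex.ofReal_re, ← Complex.ofReal_mul,
        Real.mul_self_sqrt (hP.eigenvalues_pos i).le]]
  · -- commutation
    have e1 : star Uv * (W * P) * Uv = (star Uv * W * Uv) * Matrix.diagonal d := by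
      conv_lhs => rw [hspec]
      simp only [Matrix.mul_assoc, hUv1', Matrix.mul_one]
    have e2 : star Uv * (P * W) * Uv = Matrix.diagonal d * (star Uv * W * Uv) := by
      conv_lhs => rw [hspec]
      simp only [Matrix.mul_assoc]
      rw [← Matrix.mul_assoc (star Uv) Uv, hUv1', Matrix.one_mul]
    have hBW : (star Uv * W * Uv) * Matrix.diagonal d = Matrix.diagonal d * (star Uv * W * Uv) := by
      rw [← e1, ← e2, hcomm]
    have hBg := commute_diagonal_map (star Uv * W * Uv) d g hBW
    calc W * (Uv * Matrix.diagonal (fun i => g (d i)) * star Uv)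
        = Uv * ((star Uv * W * Uv) * Matrix.diagonal (fun i => g (d i))) * star Uv := by
          conv_rhs => simp only [Matrix.mul_assoc]
          rw [← Matrix.mul_assoc Uv (star Uv), hUv1, Matrix.one_mul]
          simp only [Matrix.mul_assoc]
      _ = Uv * (Matrix.diagonal (fun i => g (d i)) * (star Uv * W * Uv)) * star Uv := by
          rw [hBg]
      _ = (Uv * Matrix.diagonal (fun i => g (d i)) * star Uv) * W := by
          simp only [Matrix.mul_assoc, hUv1, Matrix.mul_one]

lemma posdef_conj_aux2 {n m : Type*} [Fintype n] [Fintype m] {A : Matrix n n ℂ} (hA : A.PosDef)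
    (B : Matrix n m ℂ) (hB : ∀ x, B *ᵥ x = 0 → x = 0) : (Bᴴ * A * B).PosDef := by
  refine Matrix.posDef_iff_dotProduct_mulVec.mpr ⟨?_, ?_⟩
  · exact Matrix.isHermitian_conjTranspose_mul_mul B hA.1
  · intro x hx
    have hBx : B *ᵥ x ≠ 0 := fun h => hx (hB x h)
    simpa only [star_mulVec, dotProduct_mulVec, vecMul_vecMul] using hA.dotProduct_mulVec_pos hBx

/-- Diagonal entries of a Hermitian idempotent matrix lie in [0,1] and are real. -/
lemma proj_diag_aux {ι : Type*} [Fintype ι] (X : Matrix ι ι ℂ) (hherm : Xᴴ = X)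
    (hidem : X * X = X) (k : ι) :
    X k k = ((X k k).re : ℂ) ∧ 0 ≤ (X k k).re ∧ (X k k).re ≤ 1 := by
  have h1 : X k k = ((∑ j, Complex.normSq (X k j) : ℝ) : ℂ) := by
    conv_lhs => rw [← hidem]
    rw [Matrix.mul_apply]
    push_cast
    refine Finset.sum_congr rfl fun j _ => ?_
    have hj : X j k = (starRingEnd ℂ) (X k j) := by
      have := congrFun (congrFun hherm j) k
      rw [Matrix.conjTranspose_apply] at this
      exact this.symm
    rw [hj, Complex.mul_conj]
  set r : ℝ := ∑ j, Complex.normSq (X k j) with hr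
  have hre : (X k k).re = r := by rw [h1]; simp
  have hr0 : 0 ≤ r := Finset.sum_nonneg fun j _ => Complex.normSq_nonneg _
  have hterm : Complex.normSq (X k k) ≤ r :=
    Finset.single_le_sum (fun j _ => Complex.normSq_nonneg (X k j)) (Finset.mem_univ k)
  have hsq : r * r ≤ r := by
    have : Complex.normSq (X k k) = r * r := by rw [h1]; simp [Complex.normSq_ofReal]
    linarith [hterm, this.symm.le, this.ge]
  refine ⟨by rw [hre]; exact h1, by rw [hre]; exact hr0, ?_⟩
  rw [hre]
  nlinarith

lemma kyfan_aux {n τ : ℕ} (f : Fin τ ↪ Fin n) (lam : Fin n → ℝ) (c : Fin n → ℝ)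
    (hc0 : ∀ j, 0 ≤ c j) (hc1 : ∀ j, c j ≤ 1) (hsum : ∑ j, c j = τ)
    (htop : ∀ i : Fin τ, ∀ j : Fin n, j ∉ Set.range f → lam j ≤ lam (f i)) :
    ∑ j, c j * lam j ≤ ∑ i, lam (f i) := by
  rcases Nat.eq_zero_or_pos τ with hτ | hτ
  · subst hτ
    have hz : ∀ j ∈ Finset.univ, c j = 0 := by
      intro j hj
      have := (Finset.sum_eq_zero_iff_of_nonneg (fun j _ => hc0 j)).mp (by simpa using hsum)
      exact this j hj
    simp only [Finset.univ_eq_empty, Finset.sum_empty]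
    apply le_of_eq
    exact Finset.sum_eq_zero fun j hj => by rw [hz j hj, zero_mul]
  · have hne : (Finset.univ : Finset (Fin τ)).Nonempty := by
      simpa [Finset.univ_nonempty_iff] using Fin.pos_iff_nonempty.mp hτ
    set μ : ℝ := Finset.univ.inf' hne (fun i => lam (f i)) with hμ
    have hμle : ∀ i : Fin τ, μ ≤ lam (f i) := fun i => Finset.inf'_le _ (Finset.mem_univ i)
    obtain ⟨i₀, _, hi₀⟩ := Finset.exists_mem_eq_inf' hne (fun i => lam (f i))
    have hout : ∀ j : Fin n, j ∉ Set.range f → lam j ≤ μ := by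
      intro j hj
      rw [hμ, hi₀]
      exact htop i₀ j hj
    set s : Finset (Fin n) := Finset.univ.map f with hs
    have hmem : ∀ j, j ∈ s ↔ j ∈ Set.range f := by
      intro j; simp [hs, Set.mem_range, eq_comm]
    have hsplitc : ∑ j ∈ s, c j + ∑ j ∈ sᶜ, c j = (τ : ℝ) := by
      rw [Finset.sum_add_sum_compl, hsum]
    have hson : ∑ j ∈ s, c j = ∑ i : Fin τ, c (f i) := Finset.sum_map _ f c
    have h2 : ∑ j ∈ sᶜ, c j * lam j ≤ μ * ∑ j ∈ sᶜ, c j := by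
      rw [Finset.mul_sum]
      refine Finset.sum_le_sum fun j hj => ?_
      have hjs : j ∉ Set.range f := by
        rw [← hmem]; exact (Finset.mem_compl.mp hj)
      rw [mul_comm (μ)]
      exact mul_le_mul_of_nonneg_left (hout j hjs) (hc0 j)
    have hcompl : ∑ j ∈ sᶜ, c j = ∑ i : Fin τ, (1 - c (f i)) := by
      have hτ1 : (τ : ℝ) = ∑ i : Fin τ, (1 : ℝ) := by simp
      rw [Finset.sum_sub_distrib, ← hτ1, ← hson]
      linarith [hsplitc]
    calc ∑ j, c j * lam j
        = ∑ j ∈ s, c j * lam j + ∑ j ∈ sᶜ, c j * lam j :=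
          (Finset.sum_add_sum_compl s _).symm
      _ ≤ ∑ j ∈ s, c j * lam j + μ * ∑ j ∈ sᶜ, c j := by linarith
      _ = ∑ i : Fin τ, (c (f i) * lam (f i) + μ * (1 - c (f i))) := by
          rw [Finset.sum_add_distrib, Finset.sum_map _ f (fun j => c j * lam j), hcompl,
            Finset.mul_sum]
      _ ≤ ∑ i : Fin τ, lam (f i) := by
          refine Finset.sum_le_sum fun i _ => ?_
          nlinarith [hμle i, hc1 (f i), hc0 (f i)]

lemma herm_idem_trace_bound {n τ : ℕ} (C : Matrix (Fin n) (Fin n) ℂ) (hCH : Cᴴ = C)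
    (hC2 : C * C = C) (htrC : C.trace = (τ : ℂ)) (lam : Fin n → ℝ) (f : Fin τ ↪ Fin n)
    (htop : ∀ i : Fin τ, ∀ j : Fin n, j ∉ Set.range f → lam j ≤ lam (f i)) :
    ((C * Matrix.diagonal (fun j => (lam j : ℂ))).trace).re ≤ ∑ i, lam (f i) := by
  have hCd := fun k => proj_diag_aux C hCH hC2 k
  have htr : (C * Matrix.diagonal (fun j => (lam j : ℂ))).trace = ∑ j, C j j * (lam j : ℂ) := by
    rw [Matrix.trace]
    refine Finset.sum_congr rfl fun j _ => ?_
    rw [Matrix.diag_apply, Matrix.mul_diagonal]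
  have hre : ((C * Matrix.diagonal (fun j => (lam j : ℂ))).trace).re
      = ∑ j, (C j j).re * lam j := by
    rw [htr, Complex.re_sum]
    refine Finset.sum_congr rfl fun j _ => ?_
    rw [(hCd j).1, ← Complex.ofReal_mul, Complex.ofReal_re]
    simp
  have hsumc : ∑ j, (C j j).re = (τ : ℝ) := by
    have h6 : ((∑ j, (C j j).re : ℝ) : ℂ) = ((τ : ℝ) : ℂ) := by
      push_cast
      rw [← htrC, Matrix.trace]
      refine Finset.sum_congr rfl fun j _ => ?_
      rw [Matrix.diag_apply, (hCd j).1]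
      simp
    exact_mod_cast h6
  rw [hre]
  exact kyfan_aux f lam _ (fun j => (hCd j).2.1) (fun j => (hCd j).2.2) hsumc htop

lemma proj_facts {n τ : ℕ} (M : Matrix (Fin n) (Fin τ) ℂ) (G : Matrix (Fin τ) (Fin τ) ℂ)
    (hGM : Mᴴ * M = G) (hGdet : IsUnit G.det) (hGH : Gᴴ = G) :
    (M * G⁻¹ * Mᴴ)ᴴ = M * G⁻¹ * Mᴴ ∧
    (M * G⁻¹ * Mᴴ) * (M * G⁻¹ * Mᴴ) = M * G⁻¹ * Mᴴ ∧
    (M * G⁻¹ * Mᴴ).trace = (τ : ℂ) := by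
  refine ⟨?_, ?_, ?_⟩
  · simp only [Matrix.conjTranspose_mul, Matrix.conjTranspose_conjTranspose,
      Matrix.conjTranspose_nonsing_inv, hGH]
    simp only [Matrix.mul_assoc]
  · calc (M * G⁻¹ * Mᴴ) * (M * G⁻¹ * Mᴴ)
        = M * (G⁻¹ * ((Mᴴ * M) * (G⁻¹ * Mᴴ))) := by simp only [Matrix.mul_assoc]
      _ = M * (G⁻¹ * (G * (G⁻¹ * Mᴴ))) := by rw [hGM]
      _ = M * (G⁻¹ * Mᴴ) := by
          rw [← Matrix.mul_assoc G, Matrix.mul_nonsing_inv _ hGdet, Matrix.one_mul]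
      _ = M * G⁻¹ * Mᴴ := by rw [Matrix.mul_assoc]
  · rw [Matrix.trace_mul_cycle, hGM, Matrix.mul_nonsing_inv _ hGdet, Matrix.trace_one]
    simp

lemma trace_proj_bound {n τ : ℕ} (A : Matrix (Fin n) (Fin n) ℂ) (hherm : A.IsHermitian)
    (f : Fin τ ↪ Fin n)
    (htop : ∀ i : Fin τ, ∀ j : Fin n, j ∉ Set.range f →
      hherm.eigenvalues j ≤ hherm.eigenvalues (f i))
    (Pr : Matrix (Fin n) (Fin n) ℂ) (hPrH : Prᴴ = Pr) (hPr2 : Pr * Pr = Pr)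
    (htrPr : Pr.trace = (τ : ℂ)) :
    ((Pr * A).trace).re ≤ ∑ i, hherm.eigenvalues (f i) := by
  have hUw1 : (hherm.eigenvectorUnitary : Matrix (Fin n) (Fin n) ℂ)
      * star (hherm.eigenvectorUnitary : Matrix (Fin n) (Fin n) ℂ) = 1 :=
    Matrix.mem_unitaryGroup_iff.mp (hherm.eigenvectorUnitary).2
  set Uw : Matrix (Fin n) (Fin n) ℂ := (hherm.eigenvectorUnitary : Matrix (Fin n) (Fin n) ℂ)
  have hspecW : A = Uw * Matrix.diagonal (fun j => (hherm.eigenvalues j : ℂ)) * star Uw := by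
    convert hherm.spectral_theorem using 2
    rw [Unitary.conjStarAlgAut_apply]; rfl
  have hCH : (star Uw * Pr * Uw)ᴴ = star Uw * Pr * Uw := by
    simp only [Matrix.star_eq_conjTranspose, Matrix.conjTranspose_mul,
      Matrix.conjTranspose_conjTranspose, hPrH]
    simp only [Matrix.mul_assoc]
  have hC2 : (star Uw * Pr * Uw) * (star Uw * Pr * Uw) = star Uw * Pr * Uw := by
    calc (star Uw * Pr * Uw) * (star Uw * Pr * Uw)
        = star Uw * (Pr * ((Uw * star Uw) * (Pr * Uw))) := by simp only [Matrix.mul_assoc]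
      _ = star Uw * ((Pr * Pr) * Uw) := by
          rw [hUw1, Matrix.one_mul]; simp only [Matrix.mul_assoc]
      _ = star Uw * Pr * Uw := by rw [hPr2, Matrix.mul_assoc]
  have htrC : (star Uw * Pr * Uw).trace = (τ : ℂ) := by
    rw [Matrix.trace_mul_cycle, hUw1, Matrix.one_mul, htrPr]
  have htr2 : (Pr * A).trace
      = ((star Uw * Pr * Uw) * Matrix.diagonal (fun j => (hherm.eigenvalues j : ℂ))).trace := by
    conv_lhs => rw [hspecW]
    calc (Pr * (Uw * Matrix.diagonal (fun j => (hherm.eigenvalues j : ℂ)) * star Uw)).trace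
        = ((Pr * (Uw * Matrix.diagonal (fun j => (hherm.eigenvalues j : ℂ)))) * star Uw).trace := by
          congr 1
          simp only [Matrix.mul_assoc]
      _ = (star Uw * (Pr * (Uw * Matrix.diagonal (fun j => (hherm.eigenvalues j : ℂ))))).trace :=
          (Matrix.trace_mul_comm _ _)
      _ = ((star Uw * Pr * Uw) * Matrix.diagonal (fun j => (hherm.eigenvalues j : ℂ))).trace := by
          congr 1
          simp only [Matrix.mul_assoc]
  rw [htr2]
  exact herm_idem_trace_bound _ hCH hC2 htrC _ f htop

lemma part3_aux {n τ : ℕ}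
    (P : Matrix (Fin n) (Fin n) ℂ) (hP : P.PosDef)
    (W : Matrix (Fin n) (Fin n) ℂ)
    (hcomm : W * P = P * W) (hherm : (W * P).IsHermitian)
    (f : Fin τ ↪ Fin n)
    (htop : ∀ i : Fin τ, ∀ j : Fin n, j ∉ Set.range f →
      hherm.eigenvalues j ≤ hherm.eigenvalues (f i))
    (S : Matrix (Fin τ) (Fin n) ℂ)
    (rankinj : ∀ x : Fin τ → ℂ, Sᴴ *ᵥ x = 0 → x = 0) :
    (((S * P * Sᴴ)⁻¹ * (S * P * W * P * Sᴴ)).trace).re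
      ≤ ∑ i : Fin τ, hherm.eigenvalues (f i) := by
  obtain ⟨R, hRH, hRR, hWR⟩ := sqrtP_aux P hP W hcomm
  have hRP : R * P = P * R := by rw [← hRR]; simp only [Matrix.mul_assoc]
  have hMH : (R * Sᴴ)ᴴ = S * R := by
    rw [Matrix.conjTranspose_mul, Matrix.conjTranspose_conjTranspose, hRH]
  have hMinj : ∀ x, (R * Sᴴ) *ᵥ x = 0 → x = 0 := by
    intro x hx
    have h1 : R *ᵥ ((R * Sᴴ) *ᵥ x) = 0 := by rw [hx, Matrix.mulVec_zero]
    rw [Matrix.mulVec_mulVec, ← Matrix.mul_assoc, hRR] at h1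
    have hS0 : Sᴴ *ᵥ x = 0 := by
      by_contra hne
      have h2 := hP.dotProduct_mulVec_pos hne
      rw [Matrix.mulVec_mulVec, h1, dotProduct_zero] at h2
      exact lt_irrefl _ h2
    exact rankinj x hS0
  have hGM : (R * Sᴴ)ᴴ * (R * Sᴴ) = S * P * Sᴴ := by
    rw [hMH, ← hRR]; simp only [Matrix.mul_assoc]
  have hGpd : (S * P * Sᴴ).PosDef := by
    rw [← hGM]
    have h1 := posdef_conj_aux2 (Matrix.PosDef.one (n := Fin n) (R := ℂ)) (R * Sᴴ) hMinj
    simpa [Matrix.mul_one] using h1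
  have hGdet : IsUnit (S * P * Sᴴ).det := isUnit_iff_ne_zero.mpr hGpd.det_pos.ne'
  obtain ⟨hPrH, hPr2, htrPr⟩ := proj_facts (R * Sᴴ) (S * P * Sᴴ) hGM hGdet hGpd.1.eq
  have hsq : P * W * P = R * (W * P) * R := by
    have h5 : P * W * P = W * P * P := by rw [← hcomm]
    have h4 : R * (W * P) * R = W * P * P := by
      calc R * (W * P) * R = (R * W) * (P * R) := by simp only [Matrix.mul_assoc]
        _ = (W * R) * (R * P) := by rw [hWR, hRP]
        _ = W * (R * R) * P := by simp only [Matrix.mul_assoc]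
        _ = W * P * P := by rw [hRR]
    rw [h5, h4]
  have hexpr : S * P * W * P * Sᴴ = (R * Sᴴ)ᴴ * (W * P) * (R * Sᴴ) := by
    calc S * P * W * P * Sᴴ = S * (P * W * P) * Sᴴ := by simp only [Matrix.mul_assoc]
      _ = S * (R * (W * P) * R) * Sᴴ := by rw [hsq]
      _ = (R * Sᴴ)ᴴ * (W * P) * (R * Sᴴ) := by rw [hMH]; simp only [Matrix.mul_assoc]
  have htr : ((S * P * Sᴴ)⁻¹ * (S * P * W * P * Sᴴ)).trace
      = (((R * Sᴴ) * (S * P * Sᴴ)⁻¹ * (R * Sᴴ)ᴴ) * (W * P)).trace := by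
    rw [hexpr]
    calc ((S * P * Sᴴ)⁻¹ * ((R * Sᴴ)ᴴ * (W * P) * (R * Sᴴ))).trace
        = (((R * Sᴴ)ᴴ * (W * P) * (R * Sᴴ)) * (S * P * Sᴴ)⁻¹).trace :=
          Matrix.trace_mul_comm _ _
      _ = ((R * Sᴴ)ᴴ * ((W * P) * ((R * Sᴴ) * (S * P * Sᴴ)⁻¹))).trace := by
          congr 1; simp only [Matrix.mul_assoc]
      _ = (((W * P) * ((R * Sᴴ) * (S * P * Sᴴ)⁻¹)) * (R * Sᴴ)ᴴ).trace :=
          Matrix.trace_mul_comm _ _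
      _ = ((W * P) * ((R * Sᴴ) * (S * P * Sᴴ)⁻¹ * (R * Sᴴ)ᴴ)).trace := by
          congr 1; simp only [Matrix.mul_assoc]
      _ = (((R * Sᴴ) * (S * P * Sᴴ)⁻¹ * (R * Sᴴ)ᴴ) * (W * P)).trace :=
          Matrix.trace_mul_comm _ _
  rw [htr]
  exact trace_proj_bound (W * P) hherm f htop _ hPrH hPr2 htrPr

lemma rank_mulVec_inj {n τ : ℕ} (S : Matrix (Fin τ) (Fin n) ℂ) (hS : S.rank = τ) :
    ∀ x : Fin τ → ℂ, Sᴴ *ᵥ x = 0 → x = 0 := by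
  intro x hx
  have hr : Sᴴ.rank = τ := by rw [Matrix.rank_conjTranspose, hS]
  have h1 : LinearMap.ker Sᴴ.mulVecLin = ⊥ := by
    have h2 := Sᴴ.mulVecLin.finrank_range_add_finrank_ker
    rw [show Module.finrank ℂ (Fin τ → ℂ) = τ by simp] at h2
    have h3 : Module.finrank ℂ (LinearMap.range Sᴴ.mulVecLin) = τ := hr
    rw [h3] at h2
    have : Module.finrank ℂ (LinearMap.ker Sᴴ.mulVecLin) = 0 := by omega
    exact Submodule.finrank_eq_zero.mp this
  have : x ∈ LinearMap.ker Sᴴ.mulVecLin := by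
    simp [LinearMap.mem_ker, Matrix.mulVecLin_apply, hx]
  rw [h1] at this
  simpa using this


/-- The eigen-pilots S_opt = √Pow U₁ᴴ, where the orthonormal columns of U₁ are eigenvectors
of W̄P̄ for its τ largest eigenvalues, satisfy the per-user power constraint and maximize
tr((S P̄ S*)⁻¹ S P̄ W̄ P̄ S*) over all full-row-rank τ×n pilot matrices S whose columns
satisfy s_k* s_k ≤ Pow, achieving the sum of the τ largest eigenvalues of W̄P̄. -/
theorem stmt4 {n τ : ℕ} (Pow : ℝ) (hPow : 0 < Pow)
    (P : Matrix (Fin n) (Fin n) ℂ) (hP : P.PosDef)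
    (w : Fin n → ℝ) (hw : ∀ i, 0 ≤ w i)
    (W : Matrix (Fin n) (Fin n) ℂ) (hWdiag : W = Matrix.diagonal (fun i => (w i : ℂ)))
    (hcomm : W * P = P * W) (hherm : (W * P).IsHermitian)
    (U₁ : Matrix (Fin n) (Fin τ) ℂ) (hU : U₁ᴴ * U₁ = 1)
    (f : Fin τ ↪ Fin n)
    (hEig : (W * P) * U₁ = U₁ * Matrix.diagonal (fun i => (hherm.eigenvalues (f i) : ℂ)))
    (htop : ∀ i : Fin τ, ∀ j : Fin n, j ∉ Set.range f →
      hherm.eigenvalues j ≤ hherm.eigenvalues (f i)) :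
    let Sopt : Matrix (Fin τ) (Fin n) ℂ := (Real.sqrt Pow : ℂ) • U₁ᴴ
    (∀ k : Fin n, ((Soptᴴ * Sopt) k k).re ≤ Pow) ∧
    ((Sopt * P * Soptᴴ)⁻¹ * (Sopt * P * W * P * Soptᴴ)).trace
      = ((∑ i : Fin τ, hherm.eigenvalues (f i) : ℝ) : ℂ) ∧
    (∀ S : Matrix (Fin τ) (Fin n) ℂ, S.rank = τ →
      (∀ k : Fin n, ((Sᴴ * S) k k).re ≤ Pow) →
      (((S * P * Sᴴ)⁻¹ * (S * P * W * P * Sᴴ)).trace).re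
        ≤ ∑ i : Fin τ, hherm.eigenvalues (f i)) := by
  intro Sopt
  have hzc : star ((Real.sqrt Pow : ℝ) : ℂ) = ((Real.sqrt Pow : ℝ) : ℂ) := by
    rw [Complex.star_def]; exact Complex.conj_ofReal _
  have hzz : ((Real.sqrt Pow : ℝ) : ℂ) * ((Real.sqrt Pow : ℝ) : ℂ) = (Pow : ℂ) := by
    rw [← Complex.ofReal_mul, Real.mul_self_sqrt hPow.le]
  refine ⟨?_, ?_, ?_⟩
  · intro k
    have hX : Soptᴴ * Sopt = (Pow : ℂ) • (U₁ * U₁ᴴ) := by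
      show ((((Real.sqrt Pow : ℝ) : ℂ)) • U₁ᴴ)ᴴ * ((((Real.sqrt Pow : ℝ) : ℂ)) • U₁ᴴ) = _
      rw [Matrix.conjTranspose_smul, hzc, Matrix.conjTranspose_conjTranspose,
        Matrix.smul_mul, Matrix.mul_smul, smul_smul, hzz]
    have hXh : (U₁ * U₁ᴴ)ᴴ = U₁ * U₁ᴴ := by
      rw [Matrix.conjTranspose_mul, Matrix.conjTranspose_conjTranspose]
    have hXi : (U₁ * U₁ᴴ) * (U₁ * U₁ᴴ) = U₁ * U₁ᴴ := by
      calc (U₁ * U₁ᴴ) * (U₁ * U₁ᴴ) = U₁ * (U₁ᴴ * U₁) * U₁ᴴ := by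
            simp only [Matrix.mul_assoc]
        _ = U₁ * U₁ᴴ := by rw [hU, Matrix.mul_one]
    obtain ⟨_, h0, h1⟩ := proj_diag_aux _ hXh hXi k
    rw [hX]
    have : (((Pow : ℂ) • (U₁ * U₁ᴴ)) k k).re = Pow * ((U₁ * U₁ᴴ) k k).re := by
      simp [Matrix.smul_apply, Complex.re_ofReal_mul]
    rw [this]
    nlinarith
  · set B := U₁ᴴ * P * U₁ with hB
    have hBpd : B.PosDef := posdef_conj_aux2 hP U₁ (fun x hx => by
      have h2 : U₁ᴴ *ᵥ (U₁ *ᵥ x) = 0 := by rw [hx, Matrix.mulVec_zero]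
      rwa [Matrix.mulVec_mulVec, hU, Matrix.one_mulVec] at h2)
    have hBdet : IsUnit B.det := isUnit_iff_ne_zero.mpr hBpd.det_pos.ne'
    set Dτ := Matrix.diagonal (fun i => (hherm.eigenvalues (f i) : ℂ)) with hDτ
    have hPowne : (Pow : ℂ) ≠ 0 := by exact_mod_cast hPow.ne'
    have hG : Sopt * P * Soptᴴ = (Pow : ℂ) • B := by
      show (((Real.sqrt Pow : ℝ) : ℂ) • U₁ᴴ) * P * ((((Real.sqrt Pow : ℝ) : ℂ)) • U₁ᴴ)ᴴ = _
      rw [Matrix.conjTranspose_smul, hzc, Matrix.conjTranspose_conjTranspose,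
        Matrix.smul_mul, Matrix.smul_mul, Matrix.mul_smul, smul_smul, hzz, hB]
    have hH : Sopt * P * W * P * Soptᴴ = (Pow : ℂ) • (B * Dτ) := by
      show (((Real.sqrt Pow : ℝ) : ℂ) • U₁ᴴ) * P * W * P * ((((Real.sqrt Pow : ℝ) : ℂ)) • U₁ᴴ)ᴴ = _
      rw [Matrix.conjTranspose_smul, hzc, Matrix.conjTranspose_conjTranspose,
        Matrix.smul_mul, Matrix.smul_mul, Matrix.smul_mul, Matrix.smul_mul,
        Matrix.mul_smul, smul_smul, hzz]
      congr 1
      calc U₁ᴴ * P * W * P * U₁ = U₁ᴴ * (P * ((W * P) * U₁)) := by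
            simp only [Matrix.mul_assoc]
        _ = U₁ᴴ * (P * (U₁ * Dτ)) := by rw [hEig]
        _ = B * Dτ := by rw [hB]; simp only [Matrix.mul_assoc]
    have hGinv : (Sopt * P * Soptᴴ)⁻¹ = (Pow : ℂ)⁻¹ • B⁻¹ := by
      rw [hG]
      apply Matrix.inv_eq_left_inv
      rw [Matrix.smul_mul, Matrix.mul_smul, smul_smul, Matrix.nonsing_inv_mul B hBdet,
        inv_mul_cancel₀ hPowne, one_smul]
    rw [hGinv, hH, Matrix.smul_mul, Matrix.mul_smul, smul_smul, inv_mul_cancel₀ hPowne,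
      one_smul, ← Matrix.mul_assoc, Matrix.nonsing_inv_mul B hBdet, Matrix.one_mul,
      hDτ, Matrix.trace_diagonal]
    push_cast
    ring
  · intro S hrank _hpow
    exact part3_aux P hP W hcomm hherm f htop S (rank_mulVec_inj S hrank)
end

section
/- Let B be Hermitian positive definite, S ∈ ℂ^{N×m}, and define T = B^{1/2}(I - P)B^{1/2} where P is the orthogonal projection onto the column space of B^{1/2}S*. Then T is Hermitian PSD, and for any row vector s ∈ ℂ^{1×m}: sTs* = 0 if and only if s* ∈ R(S*); equivalently sTs* > 0 if and only if s* ∉ R(S*). -/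
open Matrix ComplexOrder

/-- The positive semidefinite square root of a positive semidefinite matrix, as defined in
the older Mathlib (`Matrix.PosSemidef.sqrt`, since removed). -/
noncomputable def Matrix.PosSemidef.sqrt {n 𝕜 : Type*} [Fintype n] [RCLike 𝕜] [DecidableEq n]
    {A : Matrix n n 𝕜} (hA : A.PosSemidef) : Matrix n n 𝕜 :=
  (hA.1.eigenvectorUnitary : Matrix n n 𝕜) * diagonal ((↑) ∘ (fun x => Real.sqrt x) ∘ hA.1.eigenvalues) *
    (star hA.1.eigenvectorUnitary : Matrix n n 𝕜)

theorem stmt9_sqrt_herm {n : Type*} [Fintype n] [DecidableEq n]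
    {A : Matrix n n ℂ} (hA : A.PosSemidef) : (hA.sqrt)ᴴ = hA.sqrt := by
  unfold Matrix.PosSemidef.sqrt
  rw [conjTranspose_mul, conjTranspose_mul, diagonal_conjTranspose, ← Matrix.star_eq_conjTranspose,
    ← Matrix.star_eq_conjTranspose, star_star, Matrix.mul_assoc]
  congr 3
  funext i
  simp

theorem stmt9_sqrt_mul_self {n : Type*} [Fintype n] [DecidableEq n]
    {A : Matrix n n ℂ} (hA : A.PosSemidef) : hA.sqrt * hA.sqrt = A := by
  unfold Matrix.PosSemidef.sqrt
  conv_rhs => rw [hA.1.spectral_theorem, Unitary.conjStarAlgAut_apply]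
  have hU : (star hA.1.eigenvectorUnitary : Matrix n n ℂ) * (hA.1.eigenvectorUnitary : Matrix n n ℂ) = 1 :=
    Unitary.coe_star_mul_self _
  rw [show ∀ a b c d e f : Matrix n n ℂ, a * b * c * (d * e * f) = a * (b * (c * d) * e) * f by
    intros; simp only [Matrix.mul_assoc], hU, Matrix.mul_one, diagonal_mul_diagonal]
  congr 3
  funext i
  simp only [Function.comp]
  rw [← RCLike.ofReal_mul, Real.mul_self_sqrt (hA.eigenvalues_nonneg i)]

/-- Let B be Hermitian positive definite, S an N×m matrix, P the orthogonal projection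
onto the column space of B^{1/2}S*, and T = B^{1/2}(I - P)B^{1/2}. Then T is Hermitian
PSD and, for any row vector s, sTs* = 0 iff s* ∈ R(S*); equivalently sTs* > 0 iff
s* ∉ R(S*). -/
theorem stmt9 {N m : ℕ} (B : Matrix (Fin m) (Fin m) ℂ) (hB : B.PosDef)
    (S : Matrix (Fin N) (Fin m) ℂ)
    (P : Matrix (Fin m) (Fin m) ℂ)
    (hProj : P * P = P) (hHerm : Pᴴ = P)
    (hRange : ∀ v : Matrix (Fin m) (Fin 1) ℂ,
      (∃ c : Matrix (Fin N) (Fin 1) ℂ, v = ((Matrix.PosSemidef.sqrt hB.posSemidef) * Sᴴ) * c) → P * v = v)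
    (hInto : ∀ v : Matrix (Fin m) (Fin 1) ℂ,
      ∃ c : Matrix (Fin N) (Fin 1) ℂ, P * v = ((Matrix.PosSemidef.sqrt hB.posSemidef) * Sᴴ) * c) :
    let T : Matrix (Fin m) (Fin m) ℂ :=
      (Matrix.PosSemidef.sqrt hB.posSemidef) * (1 - P) * (Matrix.PosSemidef.sqrt hB.posSemidef)
    T.PosSemidef ∧
    (∀ s : Matrix (Fin 1) (Fin m) ℂ,
      (((s * T * sᴴ) 0 0 = 0) ↔ ∃ c : Matrix (Fin N) (Fin 1) ℂ, sᴴ = Sᴴ * c) ∧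
      ((0 < ((s * T * sᴴ) 0 0).re) ↔ ¬ ∃ c : Matrix (Fin N) (Fin 1) ℂ, sᴴ = Sᴴ * c)) := by
  intro T
  set Q := hB.posSemidef.sqrt with hQ
  have hQH : Qᴴ = Q := stmt9_sqrt_herm hB.posSemidef
  have hQQ : Q * Q = B := stmt9_sqrt_mul_self hB.posSemidef
  -- Q is invertible
  have hQunit : IsUnit Q := by
    rw [Matrix.isUnit_iff_isUnit_det]
    have hdet : Q.det * Q.det = B.det := by rw [← Matrix.det_mul, hQQ]
    have hBdet : B.det ≠ 0 := ne_of_gt hB.det_pos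
    have : Q.det ≠ 0 := fun h => hBdet (by rw [← hdet, h, zero_mul])
    exact isUnit_iff_ne_zero.mpr this
  have h1P : (1 - P) * (1 - P) = 1 - P := by
    simp only [mul_sub, sub_mul, one_mul, mul_one, hProj]; abel
  have h1PH : (1 - P)ᴴ = 1 - P := by
    rw [conjTranspose_sub, conjTranspose_one, hHerm]
  have hAH : ((1 - P) * Q)ᴴ = Q * (1 - P) := by
    rw [conjTranspose_mul, hQH, h1PH]
  have hT : T = ((1 - P) * Q)ᴴ * ((1 - P) * Q) := by
    have h2 : Q * (1 - P) * ((1 - P) * Q) = Q * (1 - P) * Q := by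
      rw [mul_assoc, ← mul_assoc (1 - P) (1 - P) Q, h1P, ← mul_assoc]
    rw [hAH]
    exact h2.symm
  constructor
  · rw [hT]; exact posSemidef_conjTranspose_mul_self _
  intro s
  set v : Matrix (Fin m) (Fin 1) ℂ := (1 - P) * Q * sᴴ with hv
  have hmat : s * T * sᴴ = vᴴ * v := by
    rw [hv, conjTranspose_mul, hT]
    simp only [Matrix.conjTranspose_conjTranspose, hAH, Matrix.mul_assoc]
  have hentry : (s * T * sᴴ) 0 0 = ((∑ i, Complex.normSq (v i 0) : ℝ) : ℂ) := by
    rw [hmat]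
    simp only [Matrix.mul_apply, Matrix.conjTranspose_apply]
    push_cast
    congr 1
    ext i
    rw [Complex.normSq_eq_conj_mul_self]
    rfl
  -- key iff : v = 0 ↔ ∃ c, sᴴ = Sᴴ * c
  have hkey : v = 0 ↔ ∃ c : Matrix (Fin N) (Fin 1) ℂ, sᴴ = Sᴴ * c := by
    constructor
    · intro h0
      have hPw : P * (Q * sᴴ) = Q * sᴴ := by
        have h0' : Q * sᴴ - P * (Q * sᴴ) = 0 := by
          rw [← h0, hv, sub_mul, one_mul, Matrix.sub_mul, Matrix.mul_assoc]
        exact (sub_eq_zero.mp h0').symm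
      obtain ⟨c, hc⟩ := hInto (Q * sᴴ)
      rw [hPw] at hc
      have hinvQ : Invertible Q := hQunit.invertible
      refine ⟨c, Matrix.mul_right_injective_of_invertible Q ?_⟩
      show Q * sᴴ = Q * (Sᴴ * c)
      rw [hc, ← Matrix.mul_assoc]
    · rintro ⟨c, hc⟩
      have : Q * sᴴ = (Q * Sᴴ) * c := by rw [hc, Matrix.mul_assoc]
      have hPw : P * (Q * sᴴ) = Q * sᴴ := hRange _ ⟨c, this⟩
      rw [hv, sub_mul, one_mul, Matrix.sub_mul, Matrix.mul_assoc, hPw, sub_self]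
  have hsum0 : (∑ i, Complex.normSq (v i 0) : ℝ) = 0 ↔ v = 0 := by
    constructor
    · intro h
      have := (Finset.sum_eq_zero_iff_of_nonneg
        (fun i _ => Complex.normSq_nonneg (v i 0))).mp h
      ext i j
      have hj : j = 0 := Subsingleton.elim _ _
      rw [hj]
      exact Complex.normSq_eq_zero.mp (this i (Finset.mem_univ i))
    · intro h; rw [h]; simp
  have hnn : 0 ≤ (∑ i, Complex.normSq (v i 0) : ℝ) :=
    Finset.sum_nonneg fun i _ => Complex.normSq_nonneg _
  have hiff1 : (s * T * sᴴ) 0 0 = 0 ↔ ∃ c : Matrix (Fin N) (Fin 1) ℂ, sᴴ = Sᴴ * c := by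
    rw [hentry, ← hkey, ← hsum0]
    exact Complex.ofReal_eq_zero
  refine ⟨hiff1, ?_⟩
  rw [← hiff1, hentry]
  simp only [Complex.ofReal_re]
  constructor
  · intro h hc
    rw [Complex.ofReal_eq_zero] at hc
    exact absurd hc (ne_of_gt h)
  · intro h
    rcases lt_or_eq_of_le hnn with h' | h'
    · exact h'
    · exact absurd (by rw [← h']; exact Complex.ofReal_zero) h
end

section
/- For a Hermitian positive definite matrix Q ∈ ℂ^{N×N} and N_RF ≤ N, the maximum over full-row-rank matrices W ∈ ℂ^{N_RF×N} of tr(W Q² W* (W Q W*)^{-1}) equals the sum of the N_RF largest eigenvalues of Q, attained by W = T Ũ* where Ũ's columns are the top-N_RF eigenvectors of Q and T is any invertible N_RF×N_RF matrix. -/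
open Matrix ComplexOrder


lemma aux_inj {m n : Type*} [Fintype m] [Fintype n] (A : Matrix m n ℂ)
    (h : A.rank = Fintype.card n) : Function.Injective A.mulVec := by
  have h1 := LinearMap.finrank_range_add_finrank_ker A.mulVecLin
  rw [Matrix.rank] at h
  rw [h, Module.finrank_pi] at h1
  have hker : Module.finrank ℂ (LinearMap.ker A.mulVecLin) = 0 := by omega
  have := Submodule.finrank_eq_zero.mp hker
  have hinj : Function.Injective A.mulVecLin := by
    rwa [← LinearMap.ker_eq_bot]
  exact hinj

lemma aux_combo {N NRF : ℕ} (f : Fin NRF ↪ Fin N) (lam : Fin N → ℝ)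
    (htop : ∀ i : Fin NRF, ∀ j : Fin N, j ∉ Set.range f → lam j ≤ lam (f i))
    (μ : Fin N → ℝ) (h0 : ∀ j, 0 ≤ μ j) (h1 : ∀ j, μ j ≤ 1)
    (hsum : ∑ j, μ j = NRF) :
    ∑ j, lam j * μ j ≤ ∑ i, lam (f i) := by
  rcases Nat.eq_zero_or_pos NRF with h | h
  · subst h
    have : ∀ j, μ j = 0 := by
      intro j
      have hle : μ j ≤ ∑ k, μ k := Finset.single_le_sum (fun k _ => h0 k) (Finset.mem_univ j)
      have := h0 j
      simp only [hsum] at hle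
      push_cast at hle
      linarith
    simp [this]
  · have hne : (Finset.univ : Finset (Fin NRF)).Nonempty := by
      rwa [Finset.univ_nonempty_iff, ← Fin.pos_iff_nonempty]
    set m : ℝ := Finset.univ.inf' hne (fun i => lam (f i)) with hm
    have hmle : ∀ i : Fin NRF, m ≤ lam (f i) := fun i =>
      Finset.inf'_le _ (Finset.mem_univ i)
    have hlem : ∀ j : Fin N, j ∉ Set.range f → lam j ≤ m := by
      intro j hj
      exact Finset.le_inf' hne _ (fun i _ => htop i j hj)
    set S : Finset (Fin N) := Finset.univ.image f with hS
    have hmemS : ∀ j, j ∈ S ↔ j ∈ Set.range f := by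
      intro j; simp [hS, Set.mem_range]
    have hsplit : ∀ g : Fin N → ℝ, ∑ j, g j = ∑ i, g (f i) + ∑ j ∈ Sᶜ, g j := by
      intro g
      rw [← Finset.sum_add_sum_compl S g]
      congr 1
      rw [hS, Finset.sum_image (fun a _ b _ hab => f.injective hab)]
    have key1 : ∑ j ∈ Sᶜ, lam j * μ j ≤ ∑ j ∈ Sᶜ, m * μ j := by
      apply Finset.sum_le_sum
      intro j hj
      have : j ∉ Set.range f := by
        rw [← hmemS]; simpa using hj
      exact mul_le_mul_of_nonneg_right (hlem j this) (h0 j)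
    have key2 : ∑ i, lam (f i) * (μ (f i) - 1) ≤ ∑ i, m * (μ (f i) - 1) := by
      apply Finset.sum_le_sum
      intro i _
      have h1' : μ (f i) - 1 ≤ 0 := by linarith [h1 (f i)]
      nlinarith [hmle i]
    have e1 : ∑ j, lam j * μ j = ∑ i, lam (f i) * μ (f i) + ∑ j ∈ Sᶜ, lam j * μ j :=
      hsplit _
    have e2 : ∑ j, μ j = ∑ i, μ (f i) + ∑ j ∈ Sᶜ, μ j := hsplit _
    have e3 : ∑ i, lam (f i) * (μ (f i) - 1) =
        ∑ i, lam (f i) * μ (f i) - ∑ i, lam (f i) := by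
      rw [← Finset.sum_sub_distrib]
      congr 1; ext i; ring
    have e4 : ∑ i, m * (μ (f i) - 1) = m * ∑ i, μ (f i) - m * NRF := by
      simp only [mul_sub, mul_one, Finset.sum_sub_distrib, Finset.sum_const,
        Finset.card_univ, Fintype.card_fin, nsmul_eq_mul]
      rw [Finset.mul_sum]
      ring
    have e5 : ∑ j ∈ Sᶜ, m * μ j = m * ∑ j ∈ Sᶜ, μ j := by rw [Finset.mul_sum]
    have hc : ∑ j ∈ Sᶜ, μ j = (NRF : ℝ) - ∑ i, μ (f i) := by
      rw [← hsum, e2]; ring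
    rw [e3] at key2
    rw [e4] at key2
    rw [e5, hc] at key1
    linarith [e1]

lemma aux_comp {N NRF : ℕ} (Q : Matrix (Fin N) (Fin N) ℂ) (d : Fin NRF → ℝ)
    (hd : ∀ i, 0 < d i)
    (U : Matrix (Fin N) (Fin NRF) ℂ) (hU : Uᴴ * U = 1)
    (hEig : Q * U = U * Matrix.diagonal (fun i => (d i : ℂ)))
    (T : Matrix (Fin NRF) (Fin NRF) ℂ) (hT : IsUnit T.det) :
    ((T * Uᴴ) * (Q * Q) * (T * Uᴴ)ᴴ * ((T * Uᴴ) * Q * (T * Uᴴ)ᴴ)⁻¹).trace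
      = ∑ i, (d i : ℂ) := by
  set D : Matrix (Fin NRF) (Fin NRF) ℂ := Matrix.diagonal (fun i => (d i : ℂ)) with hD
  have hDdet : IsUnit D.det := by
    rw [hD, Matrix.det_diagonal, isUnit_iff_ne_zero]
    exact Finset.prod_ne_zero_iff.mpr fun i _ =>
      Complex.ofReal_ne_zero.mpr (ne_of_gt (hd i))
  have hTH : IsUnit Tᴴ.det := by
    rw [Matrix.det_conjTranspose]; exact hT.star
  have step : ∀ (X : Matrix (Fin NRF) (Fin NRF) ℂ), Q * (U * X) = U * (D * X) := by
    intro X; rw [← Matrix.mul_assoc, hEig, Matrix.mul_assoc]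
  have stepU : ∀ (X : Matrix (Fin NRF) (Fin NRF) ℂ), Uᴴ * (U * X) = X := by
    intro X; rw [← Matrix.mul_assoc, hU, Matrix.one_mul]
  have hM2 : (T * Uᴴ) * Q * (T * Uᴴ)ᴴ = T * (D * Tᴴ) := by
    rw [conjTranspose_mul, conjTranspose_conjTranspose]
    simp only [Matrix.mul_assoc]
    rw [step, stepU]
  have hM1 : (T * Uᴴ) * (Q * Q) * (T * Uᴴ)ᴴ = T * (D * (D * Tᴴ)) := by
    rw [conjTranspose_mul, conjTranspose_conjTranspose]
    simp only [Matrix.mul_assoc]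
    rw [step, step, stepU]
  rw [hM1, hM2]
  have hinv : (T * (D * Tᴴ))⁻¹ = Tᴴ⁻¹ * (D⁻¹ * T⁻¹) := by
    rw [Matrix.mul_inv_rev, Matrix.mul_inv_rev, Matrix.mul_assoc]
  rw [hinv]
  have : T * (D * (D * Tᴴ)) * (Tᴴ⁻¹ * (D⁻¹ * T⁻¹)) = T * (D * T⁻¹) := by
    simp only [Matrix.mul_assoc]
    rw [← Matrix.mul_assoc Tᴴ Tᴴ⁻¹, Matrix.mul_nonsing_inv _ hTH, Matrix.one_mul,
      ← Matrix.mul_assoc D D⁻¹, Matrix.mul_nonsing_inv _ hDdet, Matrix.one_mul]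
  rw [this, ← Matrix.mul_assoc, Matrix.trace_mul_comm, ← Matrix.mul_assoc,
    Matrix.nonsing_inv_mul _ hT, Matrix.one_mul, hD, Matrix.trace_diagonal]
open scoped MatrixOrder in
lemma aux_upper {N NRF : ℕ} (Q : Matrix (Fin N) (Fin N) ℂ) (hQ : Q.PosDef)
    (hherm : Q.IsHermitian)
    (W : Matrix (Fin NRF) (Fin N) ℂ) (hrank : W.rank = NRF) :
    ∃ μ : Fin N → ℝ, (∀ j, 0 ≤ μ j) ∧ (∀ j, μ j ≤ 1) ∧ (∑ j, μ j = NRF) ∧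
      ((W * (Q * Q) * Wᴴ * (W * Q * Wᴴ)⁻¹).trace).re
        = ∑ j, hherm.eigenvalues j * μ j := by
  classical
  set S : Matrix (Fin N) (Fin N) ℂ := CFC.sqrt Q with hSdef
  have hSps : S.PosSemidef := (CFC.sqrt_nonneg Q).posSemidef
  have hSH : Sᴴ = S := hSps.1
  have hSS : S * S = Q := CFC.sqrt_mul_sqrt_self Q hQ.posSemidef.nonneg
  have hQdet : Q.det ≠ 0 := (hQ.det_pos).ne'
  have hSdet : IsUnit S.det := by
    rw [isUnit_iff_ne_zero]
    intro h
    apply hQdet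
    rw [← hSS, Matrix.det_mul, h, mul_zero]
  set B : Matrix (Fin NRF) (Fin N) ℂ := W * S with hBdef
  have hB : B.rank = NRF := by
    rw [hBdef, Matrix.rank_mul_eq_left_of_isUnit_det S W hSdet, hrank]
  have hBBH : B * Bᴴ = W * Q * Wᴴ := by
    rw [hBdef, conjTranspose_mul, hSH, Matrix.mul_assoc, ← Matrix.mul_assoc S S Wᴴ,
      hSS, ← Matrix.mul_assoc]
  have hcomm : S * Q = Q * S := by
    rw [← hSS, Matrix.mul_assoc]
  have hQ2 : B * Q * Bᴴ = W * (Q * Q) * Wᴴ := by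
    rw [hBdef, conjTranspose_mul, hSH]
    simp only [Matrix.mul_assoc]
    congr 1
    rw [← Matrix.mul_assoc S Q, hcomm, Matrix.mul_assoc, ← Matrix.mul_assoc S S Wᴴ, hSS]
  have hPD : (W * Q * Wᴴ).PosDef := by
    rw [← hBBH]
    refine Matrix.PosDef.of_dotProduct_mulVec_pos (isHermitian_mul_conjTranspose_self B) (fun x hx => ?_)
    have hBH : Bᴴ.rank = NRF := by rw [Matrix.rank_conjTranspose, hB]
    have hinj : Function.Injective Bᴴ.mulVec := aux_inj Bᴴ (by simpa using hBH)
    have hxne : Bᴴ *ᵥ x ≠ 0 := by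
      intro h
      apply hx
      have : Bᴴ *ᵥ x = Bᴴ *ᵥ 0 := by rw [h, Matrix.mulVec_zero]
      exact hinj this
    have heq : star x ⬝ᵥ (B * Bᴴ) *ᵥ x = star (Bᴴ *ᵥ x) ⬝ᵥ (Bᴴ *ᵥ x) := by
      rw [← Matrix.mulVec_mulVec, Matrix.dotProduct_mulVec, Matrix.star_mulVec,
        conjTranspose_conjTranspose]
    rw [heq]
    exact Matrix.dotProduct_star_self_pos_iff.mpr hxne
  set G : Matrix (Fin NRF) (Fin NRF) ℂ := W * Q * Wᴴ with hGdef
  have hGdet : IsUnit G.det := by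
    rw [isUnit_iff_ne_zero]
    exact (hPD.det_pos).ne'
  set P : Matrix (Fin N) (Fin N) ℂ := Bᴴ * (G⁻¹ * B) with hPdef
  have htr1 : (W * (Q * Q) * Wᴴ * G⁻¹).trace = (Q * P).trace := by
    rw [← hQ2]
    have : B * Q * Bᴴ * G⁻¹ = B * (Q * (Bᴴ * G⁻¹)) := by
      simp only [Matrix.mul_assoc]
    rw [this, Matrix.trace_mul_comm]
    congr 1
    simp only [hPdef, Matrix.mul_assoc]
  have hPH : Pᴴ = P := by
    have hGH : Gᴴ = G := hPD.1
    rw [hPdef, conjTranspose_mul, conjTranspose_mul, conjTranspose_conjTranspose,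
      Matrix.conjTranspose_nonsing_inv, hGH]
    simp only [Matrix.mul_assoc]
  have hP2 : P * P = P := by
    rw [hPdef]
    have : Bᴴ * (G⁻¹ * B) * (Bᴴ * (G⁻¹ * B)) = Bᴴ * (G⁻¹ * (B * Bᴴ) * (G⁻¹ * B)) := by
      simp only [Matrix.mul_assoc]
    rw [this, hBBH, Matrix.nonsing_inv_mul G hGdet, Matrix.one_mul]
  have htrP : P.trace = (NRF : ℂ) := by
    rw [hPdef, Matrix.trace_mul_comm, Matrix.mul_assoc, hBBH,
      Matrix.nonsing_inv_mul G hGdet, Matrix.trace_one]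
    simp
  -- spectral decomposition
  set V : Matrix (Fin N) (Fin N) ℂ := (hherm.eigenvectorUnitary : Matrix (Fin N) (Fin N) ℂ)
    with hVdef
  have hVV : V * star V = 1 := (Matrix.mem_unitaryGroup_iff).mp hherm.eigenvectorUnitary.2
  have hVV' : star V * V = 1 := (Matrix.mem_unitaryGroup_iff').mp hherm.eigenvectorUnitary.2
  set D : Matrix (Fin N) (Fin N) ℂ :=
    Matrix.diagonal (RCLike.ofReal ∘ hherm.eigenvalues) with hDdef
  have hspec : Q = V * D * star V := hherm.spectral_theorem
  set M : Matrix (Fin N) (Fin N) ℂ := star V * (P * V) with hMdef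
  have htr2 : (Q * P).trace = (D * M).trace := by
    rw [hspec]
    have : V * D * star V * P = V * (D * (star V * P)) := by simp only [Matrix.mul_assoc]
    rw [this, Matrix.trace_mul_comm]
    congr 1
    simp only [hMdef, Matrix.mul_assoc]
  have hMH : Mᴴ = M := by
    rw [hMdef, conjTranspose_mul, conjTranspose_mul, hPH]
    simp only [star_eq_conjTranspose, conjTranspose_conjTranspose]
    rw [Matrix.mul_assoc]
  have hM2 : M * M = M := by
    rw [hMdef]
    have : star V * (P * V) * (star V * (P * V))
        = star V * (P * (V * star V) * (P * V)) := by
      simp only [Matrix.mul_assoc]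
    rw [this, hVV, Matrix.mul_one, ← Matrix.mul_assoc P P V, hP2]
  have htrM : M.trace = (NRF : ℂ) := by
    rw [hMdef, Matrix.trace_mul_comm, Matrix.mul_assoc, hVV, Matrix.mul_one, htrP]
  set μ : Fin N → ℝ := fun j => (M j j).re with hμdef
  have hMreal : ∀ j, M j j = ((μ j : ℝ) : ℂ) := by
    intro j
    have h := congrFun (congrFun hMH j) j
    rw [conjTranspose_apply] at h
    exact (Complex.conj_eq_iff_re.mp h).symm
  have hsumk : ∀ j, M j j = ∑ k, (Complex.normSq (M j k) : ℂ) := by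
    intro j
    conv_lhs => rw [← hM2]
    rw [Matrix.mul_apply]
    congr 1
    ext k
    have hk : M k j = star (M j k) := by
      have h := congrFun (congrFun hMH k) j
      rw [conjTranspose_apply] at h
      exact h.symm
    rw [hk]
    exact Complex.mul_conj (M j k)
  have hμeq : ∀ j, μ j = ∑ k, Complex.normSq (M j k) := by
    intro j
    have := congrArg Complex.re (hsumk j)
    rwa [Complex.re_sum] at this
    -- coercion: ((normSq _ : ℝ) : ℂ).re = normSq _
  have h0 : ∀ j, 0 ≤ μ j := by
    intro j
    rw [hμeq j]
    exact Finset.sum_nonneg fun k _ => Complex.normSq_nonneg _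
  have h1 : ∀ j, μ j ≤ 1 := by
    intro j
    have hge : Complex.normSq (M j j) ≤ ∑ k, Complex.normSq (M j k) :=
      Finset.single_le_sum (fun k _ => Complex.normSq_nonneg _) (Finset.mem_univ j)
    rw [← hμeq j] at hge
    have hsq : Complex.normSq (M j j) = μ j * μ j := by
      rw [hMreal j, Complex.normSq_ofReal]
    rw [hsq] at hge
    nlinarith [h0 j]
  have hsum : ∑ j, μ j = NRF := by
    have := congrArg Complex.re htrM
    rw [Matrix.trace] at this
    simpa [Matrix.diag, Complex.re_sum] using this
  refine ⟨μ, h0, h1, hsum, ?_⟩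
  rw [htr1, htr2]
  have hDM : (D * M).trace = ∑ j, ((hherm.eigenvalues j : ℝ) : ℂ) * M j j := by
    rw [Matrix.trace]
    congr 1
    ext j
    rw [Matrix.diag_apply, Matrix.mul_apply]
    rw [Finset.sum_eq_single j]
    · rw [hDdef]; simp [Matrix.diagonal_apply_eq]
    · intro k _ hkj
      rw [hDdef, Matrix.diagonal_apply_ne _ (Ne.symm hkj), zero_mul]
    · intro h; exact absurd (Finset.mem_univ j) h
  rw [hDM, Complex.re_sum]
  congr 1
  ext j
  rw [hMreal j, ← Complex.ofReal_mul, Complex.ofReal_re]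

/-- For Hermitian positive definite Q and NRF ≤ N, the maximum over full-row-rank
NRF×N matrices W of tr(W Q² W* (W Q W*)⁻¹) equals the sum of the NRF largest
eigenvalues of Q, and is attained by W = T Ũ* where the columns of Ũ are eigenvectors
of Q for its NRF largest eigenvalues and T is any invertible NRF×NRF matrix. -/
theorem stmt13 {N NRF : ℕ} (hNRF : NRF ≤ N)
    (Q : Matrix (Fin N) (Fin N) ℂ) (hQ : Q.PosDef) (hherm : Q.IsHermitian)
    (f : Fin NRF ↪ Fin N)
    (htop : ∀ i : Fin NRF, ∀ j : Fin N, j ∉ Set.range f →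
      hherm.eigenvalues j ≤ hherm.eigenvalues (f i))
    (U : Matrix (Fin N) (Fin NRF) ℂ) (hU : Uᴴ * U = 1)
    (hEig : Q * U = U * Matrix.diagonal (fun i => (hherm.eigenvalues (f i) : ℂ))) :
    IsGreatest {x : ℝ | ∃ W : Matrix (Fin NRF) (Fin N) ℂ, W.rank = NRF ∧
        x = ((W * (Q * Q) * Wᴴ * (W * Q * Wᴴ)⁻¹).trace).re}
      (∑ i : Fin NRF, hherm.eigenvalues (f i)) ∧
    ∀ T : Matrix (Fin NRF) (Fin NRF) ℂ, IsUnit T.det →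
      (((T * Uᴴ) * (Q * Q) * (T * Uᴴ)ᴴ * ((T * Uᴴ) * Q * (T * Uᴴ)ᴴ)⁻¹).trace).re
        = ∑ i : Fin NRF, hherm.eigenvalues (f i) := by
  have hd : ∀ i : Fin NRF, 0 < hherm.eigenvalues (f i) := fun i => hQ.eigenvalues_pos (f i)
  have hcomp : ∀ T : Matrix (Fin NRF) (Fin NRF) ℂ, IsUnit T.det →
      (((T * Uᴴ) * (Q * Q) * (T * Uᴴ)ᴴ * ((T * Uᴴ) * Q * (T * Uᴴ)ᴴ)⁻¹).trace).re
        = ∑ i : Fin NRF, hherm.eigenvalues (f i) := by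
    intro T hT
    rw [aux_comp Q (fun i => hherm.eigenvalues (f i)) hd U hU hEig T hT]
    rw [← Complex.ofReal_sum, Complex.ofReal_re]
  refine ⟨⟨?_, ?_⟩, hcomp⟩
  · -- membership: W = Uᴴ
    refine ⟨Uᴴ, ?_, ?_⟩
    · have h1 : (Uᴴ).rank ≤ NRF := by simpa using Matrix.rank_le_card_height Uᴴ
      have h2 : NRF ≤ (Uᴴ).rank := by
        have h := Matrix.rank_mul_le_left Uᴴ U
        rwa [hU, Matrix.rank_one, Fintype.card_fin] at h
      omega
    · have hUeq : Uᴴ = (1 : Matrix (Fin NRF) (Fin NRF) ℂ) * Uᴴ := (Matrix.one_mul Uᴴ).symm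
      rw [hUeq]
      rw [hcomp 1 (by simp [Matrix.det_one])]
  · rintro x ⟨W, hrank, rfl⟩
    obtain ⟨μ, h0, h1, hsum, heq⟩ := aux_upper Q hQ hherm W hrank
    rw [heq]
    exact aux_combo f hherm.eigenvalues htop μ h0 h1 hsum
end
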